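/- Let M be a model based on a δ-product frame with linear grid points x_n, propositional variables In and Out satisfying the persistence condition ξ (both In and Out are forward-persistent along R_h at all relevant points), and define Δ(n) := {w ∈ W_v : x_0 R_v⁺ w and M, (x_n, w) ⊨ In ∧ ¬Out}. If M, (x_n, x_0) ⊨ □_v⁺(□_h In → In) ∧ ◇_v⁺(In ∧ ¬Out ∧ □_h Out), then Δ(n+1) ⊆ Δ(n) − {z} for some z ∈ Δ(n); in particular |Δ(n+1)| ≤ |Δ(n)| − 1 when Δ(n) is finite and nonempty. -/

import Mathlib

/-- Formulas of the bimodal language with horizontal and vertical boxes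
and the diagonal constant `δ`. -/
inductive Fml (P : Type*) where
  | var : P → Fml P
  | delta : Fml P
  | neg : Fml P → Fml P
  | and : Fml P → Fml P → Fml P
  | boxh : Fml P → Fml P
  | boxv : Fml P → Fml P
  deriving DecidableEq

namespace Fml

variable {P : Type*}

def or (φ ψ : Fml P) : Fml P := .neg (.and (.neg φ) (.neg ψ))
def imp (φ ψ : Fml P) : Fml P := Fml.or (.neg φ) ψ
def diah (φ : Fml P) : Fml P := .neg (.boxh (.neg φ))
def diav (φ : Fml P) : Fml P := .neg (.boxv (.neg φ))
/-- `□_h⁺ φ := φ ∧ □_h φ` -/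
def boxhp (φ : Fml P) : Fml P := .and φ (.boxh φ)
/-- `□_v⁺ φ := φ ∧ □_v φ` -/
def boxvp (φ : Fml P) : Fml P := .and φ (.boxv φ)
/-- `◇_h⁺ φ := φ ∨ ◇_h φ` -/
def diahp (φ : Fml P) : Fml P := Fml.or φ (diah φ)
/-- `◇_v⁺ φ := φ ∨ ◇_v φ` -/
def diavp (φ : Fml P) : Fml P := Fml.or φ (diav φ)

end Fml

/-- Satisfaction in a model based on the δ-product of the frames `(Wh, Rh)` and `(Wv, Rv)`
(frames living inside the ambient type `U`), with valuation `v`.  The diagonal `δ` is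
interpreted as `{(x,x) : x ∈ Wh ∩ Wv}`. -/
def dsat {U P : Type*} (Wh Wv : Set U) (Rh Rv : U → U → Prop) (v : P → Set (U × U)) :
    U × U → Fml P → Prop
  | p, .var q => p ∈ v q
  | p, .delta => p.1 = p.2 ∧ p.1 ∈ Wh ∧ p.1 ∈ Wv
  | p, .neg φ => ¬ dsat Wh Wv Rh Rv v p φ
  | p, .and φ ψ => dsat Wh Wv Rh Rv v p φ ∧ dsat Wh Wv Rh Rv v p ψ
  | p, .boxh φ => ∀ x : U, x ∈ Wh → Rh p.1 x → dsat Wh Wv Rh Rv v (x, p.2) φ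
  | p, .boxv φ => ∀ y : U, y ∈ Wv → Rv p.2 y → dsat Wh Wv Rh Rv v (p.1, y) φ

/-- The set of points representing the current value of a counter in the linear case:
those `w ∈ W_v` with `x_0 R_v⁺ w` at which `In ∧ ¬Out` is true in column `x_n`. -/
def counterSetIO {U P : Type*} (Wh Wv : Set U) (Rh Rv : U → U → Prop)
    (v : P → Set (U × U)) (x : ℕ → U) (In Out : P) (n : ℕ) : Set U :=
  {w | w ∈ Wv ∧ (w = x 0 ∨ Rv (x 0) w) ∧
    dsat Wh Wv Rh Rv v (x n, w) (.and (.var In) (.neg (.var Out)))}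


lemma dsat_imp {U P : Type*} (Wh Wv : Set U) (Rh Rv : U → U → Prop) (v : P → Set (U × U))
    (p : U × U) (φ ψ : Fml P) :
    dsat Wh Wv Rh Rv v p (Fml.imp φ ψ) ↔
      (dsat Wh Wv Rh Rv v p φ → dsat Wh Wv Rh Rv v p ψ) := by
  simp only [Fml.imp, Fml.or, dsat]
  tauto

/-- **Lossy decrementing in the linear case** (Claim on lossy and insertion-error counting,
item (iii)): under the persistence condition `ξ`, if
`□_v⁺(□_h In → In) ∧ ◇_v⁺(In ∧ ¬Out ∧ □_h Out)` holds at `(x_n, x_0)`, then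
`Δ(n+1) ⊆ Δ(n) − {z}` for some `z ∈ Δ(n)`; in particular `|Δ(n+1)| ≤ |Δ(n)| − 1` when
`Δ(n)` is finite and nonempty. -/
theorem linear_lossy_dec_counting {U P : Type*} (Wh Wv : Set U) (Rh Rv : U → U → Prop)
    (v : P → Set (U × U)) (x : ℕ → U) (In Out : P) (n : ℕ)
    (htrans : ∀ a b c : U, a ∈ Wh → b ∈ Wh → c ∈ Wh → Rh a b → Rh b c → Rh a c)
    (hWh : ∀ m : ℕ, x m ∈ Wh) (hx0v : x 0 ∈ Wv)
    (hsucc : ∀ m : ℕ, Rh (x m) (x (m + 1)))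
    (hlin : ∀ m : ℕ, ∀ z : U, z ∈ Wh → Rh (x m) z → z = x (m + 1) ∨ Rh (x (m + 1)) z)
    (hpers : ∀ (m : ℕ) (w : U), w ∈ Wv → (w = x 0 ∨ Rv (x 0) w) →
      dsat Wh Wv Rh Rv v (x m, w) (Fml.imp (.var In) (.boxh (.var In))) ∧
      dsat Wh Wv Rh Rv v (x m, w) (Fml.imp (.var Out) (.boxh (.var Out))))
    (hform : dsat Wh Wv Rh Rv v (x n, x 0)
      (.and (Fml.boxvp (Fml.imp (.boxh (.var In)) (.var In)))
            (Fml.diavp (.and (.var In) (.and (.neg (.var Out)) (.boxh (.var Out))))))) :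
    (∃ z : U, z ∈ counterSetIO Wh Wv Rh Rv v x In Out n ∧
        counterSetIO Wh Wv Rh Rv v x In Out (n + 1) ⊆
          counterSetIO Wh Wv Rh Rv v x In Out n \ {z}) ∧
      ((counterSetIO Wh Wv Rh Rv v x In Out n).Finite →
        (counterSetIO Wh Wv Rh Rv v x In Out n).Nonempty →
        (counterSetIO Wh Wv Rh Rv v x In Out (n + 1)).ncard ≤
          (counterSetIO Wh Wv Rh Rv v x In Out n).ncard - 1) := by
  classical
  obtain ⟨hbox, hdia⟩ := hform
  -- extract witness z from the diamond part
  simp only [Fml.diavp, Fml.or, Fml.diav, dsat, not_and, not_not, not_forall] at hdia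
  have hz : ∃ z : U, z ∈ Wv ∧ (z = x 0 ∨ Rv (x 0) z) ∧ (x n, z) ∈ v In ∧
      (x n, z) ∉ v Out ∧ ∀ y, y ∈ Wh → Rh (x n) y → (y, z) ∈ v Out := by
    by_cases hA : (x n, x 0) ∈ v In ∧ (x n, x 0) ∉ v Out ∧
        ∀ y, y ∈ Wh → Rh (x n) y → (y, x 0) ∈ v Out
    · exact ⟨x 0, hx0v, Or.inl rfl, hA.1, hA.2.1, hA.2.2⟩
    · have hant : (x n, x 0) ∈ v In → (x n, x 0) ∉ v Out →
          ∃ y, ∃ (_ : y ∈ Wh) (_ : Rh (x n) y), (y, x 0) ∉ v Out := by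
        intro h1 h2
        by_contra hc
        push_neg at hc
        exact hA ⟨h1, h2, fun y hy hr => hc y hy hr⟩
      obtain ⟨z, hzv, hzr, hzIn, hzOut, hzB⟩ := hdia hant
      refine ⟨z, hzv, Or.inr hzr, hzIn, hzOut, fun y hy hr => ?_⟩
      by_contra hc
      exact hzB ⟨y, hy, hr, hc⟩
  obtain ⟨z, hzv, hzr, hzIn, hzOut, hzBox⟩ := hz
  -- z ∈ Δ(n)
  have hzmem : z ∈ counterSetIO Wh Wv Rh Rv v x In Out n := by
    refine ⟨hzv, hzr, ?_⟩
    simp only [dsat]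
    exact ⟨hzIn, hzOut⟩
  -- box part at arbitrary reachable w
  have hboxAt : ∀ w : U, w ∈ Wv → (w = x 0 ∨ Rv (x 0) w) →
      ((∀ y : U, y ∈ Wh → Rh (x n) y → dsat Wh Wv Rh Rv v (y, w) (.var In)) →
        dsat Wh Wv Rh Rv v (x n, w) (.var In)) := by
    intro w hwv hwr hall
    simp only [Fml.boxvp, dsat] at hbox
    have hA : dsat Wh Wv Rh Rv v (x n, w) (Fml.imp (.boxh (.var In)) (.var In)) := by
      rcases hwr with rfl | hr
      · exact hbox.1
      · exact hbox.2 w hwv hr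
    exact (dsat_imp _ _ _ _ _ _ _ _).mp hA (fun y hy hr => hall y hy hr)
  have hsub : counterSetIO Wh Wv Rh Rv v x In Out (n + 1) ⊆
      counterSetIO Wh Wv Rh Rv v x In Out n \ {z} := by
    intro w hw
    obtain ⟨hwv, hwr, hwsat⟩ := hw
    simp only [dsat] at hwsat
    obtain ⟨hwIn, hwOut⟩ := hwsat
    -- persistence of In at column n+1
    have hInPers := (dsat_imp _ _ _ _ _ _ _ _).mp (hpers (n + 1) w hwv hwr).1
    have hInBox : ∀ y : U, y ∈ Wh → Rh (x (n + 1)) y →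
        dsat Wh Wv Rh Rv v (y, w) (.var In) := by
      intro y hy hry
      exact hInPers hwIn y hy hry
    -- In at (x n, w) via the box formula and linearity
    have hIn_n : dsat Wh Wv Rh Rv v (x n, w) (.var In) := by
      apply hboxAt w hwv hwr
      intro y hy hry
      rcases hlin n y hy hry with rfl | hr2
      · exact hwIn
      · exact hInBox y hy hr2
    -- ¬Out at (x n, w) via persistence of Out
    have hOut_n : ¬ dsat Wh Wv Rh Rv v (x n, w) (.var Out) := by
      intro hO
      have hOutPers := (dsat_imp _ _ _ _ _ _ _ _).mp (hpers n w hwv hwr).2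
      exact hwOut (hOutPers hO (x (n + 1)) (hWh (n + 1)) (hsucc n))
    -- w ≠ z since □_h Out at (x n, z) would give Out at (x (n+1), w)
    have hwz : w ≠ z := by
      intro rfl'
      subst rfl'
      exact hwOut (by simpa [dsat] using hzBox (x (n + 1)) (hWh (n + 1)) (hsucc n))
    exact ⟨⟨hwv, hwr, hIn_n, hOut_n⟩, hwz⟩
  refine ⟨⟨z, hzmem, hsub⟩, ?_⟩
  intro hfin _
  calc (counterSetIO Wh Wv Rh Rv v x In Out (n + 1)).ncard
      ≤ (counterSetIO Wh Wv Rh Rv v x In Out n \ {z}).ncard :=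
        Set.ncard_le_ncard hsub (hfin.subset Set.diff_subset)
    _ = (counterSetIO Wh Wv Rh Rv v x In Out n).ncard - 1 := by
        rw [Set.ncard_diff_singleton_of_mem hzmem]
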